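/- Let X be a convex subset of a real vector space. A preorder ≿ on X satisfies strong independence if and only if there exist a partially ordered real vector space V and a mixture-preserving function f : X → V that represents ≿ (i.e., x ≿ y ⟺ f(x) ≿_V f(y)). -/

import Mathlib

universe u

def IsLinearPartialOrder {V : Type*} [AddCommGroup V] [Module ℝ V]
    (r : V → V → Prop) : Prop :=
  (∀ v, r v v) ∧ (∀ u v w, r u v → r v w → r u w) ∧ (∀ v w, r v w → r w v → v = w) ∧
    ∀ (v v' w : V) (l : ℝ), 0 < l → (r v v' ↔ r (l • v + w) (l • v' + w))

section Aux

variable {W : Type u} [AddCommGroup W] [Module ℝ W]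

/-- Generators of the cone of preferred differences. -/
def genSet (X : Set W) (r : W → W → Prop) : Set W :=
  {w | ∃ t : ℝ, 0 ≤ t ∧ ∃ u ∈ X, ∃ v ∈ X, r u v ∧ w = t • (u - v)}

/-- The cone of preferred differences, as an additive submonoid. -/
def coneC (X : Set W) (r : W → W → Prop) : AddSubmonoid W :=
  AddSubmonoid.closure (genSet X r)

lemma smul_mem_coneC (X : Set W) (r : W → W → Prop) {l : ℝ} (hl : 0 ≤ l)
    {w : W} (hw : w ∈ coneC X r) : l • w ∈ coneC X r := by
  induction hw using AddSubmonoid.closure_induction with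
  | mem x hx =>
    obtain ⟨t, ht, u, hu, v, hv, huv, rfl⟩ := hx
    exact AddSubmonoid.subset_closure ⟨l * t, mul_nonneg hl ht, u, hu, v, hv, huv, (smul_smul l t _)⟩
  | zero => simpa using zero_mem (coneC X r)
  | add x y hx hy px py => rw [smul_add]; exact add_mem px py

/-- The lineality space of the cone, as a real submodule. -/
def subN (X : Set W) (r : W → W → Prop) : Submodule ℝ W where
  carrier := {w | w ∈ coneC X r ∧ -w ∈ coneC X r}
  zero_mem' := ⟨zero_mem _, by simpa using zero_mem (coneC X r)⟩
  add_mem' := fun ha hb => ⟨add_mem ha.1 hb.1, by rw [neg_add]; exact add_mem ha.2 hb.2⟩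
  smul_mem' := by
    intro c w hw
    rcases le_or_gt 0 c with hc | hc
    · exact ⟨smul_mem_coneC X r hc hw.1, by rw [← smul_neg]; exact smul_mem_coneC X r hc hw.2⟩
    · constructor
      · have : c • w = (-c) • (-w) := by rw [neg_smul, smul_neg, neg_neg]
        rw [this]; exact smul_mem_coneC X r (by linarith) hw.2
      · have : -(c • w) = (-c) • w := by rw [neg_smul]
        rw [this]; exact smul_mem_coneC X r (by linarith) hw.1

section WithRel

variable (X : Set W) (r : W → W → Prop)
variable (hconv : Convex ℝ X)
variable (hrefl : ∀ x ∈ X, r x x)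
variable (htrans : ∀ x ∈ X, ∀ y ∈ X, ∀ z ∈ X, r x y → r y z → r x z)
variable (hInd : ∀ (a : ℝ), 0 < a → a < 1 → ∀ x ∈ X, ∀ y ∈ X, ∀ z ∈ X,
    (r x y ↔ r (a • x + (1 - a) • z) (a • y + (1 - a) • z)))

include hconv htrans hInd in
lemma mix2 {u v u' v' : W} (hu : u ∈ X) (hv : v ∈ X) (hu' : u' ∈ X) (hv' : v' ∈ X)
    (huv : r u v) (huv' : r u' v') {a : ℝ} (ha0 : 0 < a) (ha1 : a < 1) :
    r (a • u + (1 - a) • u') (a • v + (1 - a) • v') := by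
  have h1 : r (a • u + (1 - a) • u') (a • v + (1 - a) • u') :=
    (hInd a ha0 ha1 u hu v hv u' hu').mp huv
  have h2 : r ((1 - a) • u' + (1 - (1 - a)) • v) ((1 - a) • v' + (1 - (1 - a)) • v) :=
    (hInd (1 - a) (by linarith) (by linarith) u' hu' v' hv' v hv).mp huv'
  have e : (1 : ℝ) - (1 - a) = a := by ring
  rw [e] at h2
  rw [add_comm ((1 - a) • u') (a • v), add_comm ((1 - a) • v') (a • v)] at h2
  have m1 : a • u + (1 - a) • u' ∈ X := hconv hu hu' ha0.le (by linarith) (by ring)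
  have m2 : a • v + (1 - a) • u' ∈ X := hconv hv hu' ha0.le (by linarith) (by ring)
  have m3 : a • v + (1 - a) • v' ∈ X := hconv hv hv' ha0.le (by linarith) (by ring)
  exact htrans _ m1 _ m2 _ m3 h1 h2

include hconv htrans hInd in
lemma coneC_struct {w : W} (hw : w ∈ coneC X r) :
    w = 0 ∨ ∃ t : ℝ, 0 < t ∧ ∃ u ∈ X, ∃ v ∈ X, r u v ∧ w = t • (u - v) := by
  induction hw using AddSubmonoid.closure_induction with
  | mem x hx =>
    obtain ⟨t, ht, u, hu, v, hv, huv, rfl⟩ := hx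
    rcases eq_or_lt_of_le ht with h | h
    · left; rw [← h, zero_smul]
    · right; exact ⟨t, h, u, hu, v, hv, huv, rfl⟩
  | zero => left; rfl
  | add x y hx hy px py =>
    rcases px with rfl | ⟨t, ht, u, hu, v, hv, huv, rfl⟩
    · simpa using py
    rcases py with rfl | ⟨s, hs, u', hu', v', hv', huv', rfl⟩
    · right; exact ⟨t, ht, u, hu, v, hv, huv, by rw [add_zero]⟩
    · right
      have hts : (0 : ℝ) < t + s := by linarith
      set a : ℝ := t / (t + s) with ha
      have ha0 : 0 < a := div_pos ht hts
      have ha1 : a < 1 := (div_lt_one hts).mpr (by linarith)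
      have hsum : a + (1 - a) = 1 := by ring
      refine ⟨t + s, hts, a • u + (1 - a) • u',
        hconv hu hu' ha0.le (by linarith) hsum, a • v + (1 - a) • v',
        hconv hv hv' ha0.le (by linarith) hsum,
        mix2 X r hconv htrans hInd hu hv hu' hv' huv huv' ha0 ha1, ?_⟩
      have h1a : (1 : ℝ) - a = s / (t + s) := by rw [ha]; field_simp; ring
      rw [h1a, ha]
      match_scalars <;> field_simp <;> ring

include hconv hInd in
lemma stepLemma {x y u v : W} {t : ℝ} (hx : x ∈ X) (hy : y ∈ X) (hu : u ∈ X) (hv : v ∈ X)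
    (huv : r u v) (ht : 0 < t) (heq : x - y = t • (u - v)) : r x y := by
  have h1t : (0 : ℝ) < 1 + t := by linarith
  set a : ℝ := 1 / (1 + t) with ha
  have ha0 : 0 < a := by positivity
  have ha1 : a < 1 := by rw [ha, div_lt_one h1t]; linarith
  rw [sub_eq_iff_eq_add] at heq
  subst heq
  have key : a • (t • (u - v) + y) + (1 - a) • v = a • y + (1 - a) • u := by
    have h1a : (1 : ℝ) - a = t / (1 + t) := by rw [ha]; field_simp; ring
    rw [h1a, ha]
    match_scalars <;> field_simp <;> ring
  have h2 : r ((1 - a) • u + (1 - (1 - a)) • y) ((1 - a) • v + (1 - (1 - a)) • y) :=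
    (hInd (1 - a) (by linarith) (by linarith) u hu v hv y hy).mp huv
  have e : (1 : ℝ) - (1 - a) = a := by ring
  rw [e, add_comm ((1 - a) • u) (a • y), add_comm ((1 - a) • v) (a • y)] at h2
  have h3 : r (a • (t • (u - v) + y) + (1 - a) • v) (a • y + (1 - a) • v) := by
    rw [key]; exact h2
  exact (hInd a ha0 ha1 _ hx y hy v hv).mpr h3

include hconv hrefl htrans hInd in
lemma keyLemma {x y : W} (hx : x ∈ X) (hy : y ∈ X) (hw : x - y ∈ coneC X r) : r x y := by
  rcases coneC_struct X r hconv htrans hInd hw with h | ⟨t, ht, u, hu, v, hv, huv, heq⟩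
  · rw [sub_eq_zero] at h; rw [h]; exact hrefl y hy
  · exact stepLemma X r hconv hInd hx hy hu hv huv ht heq

end WithRel

end Aux

theorem strong_independence_iff_mixture_preserving_representation
    {W : Type u} [AddCommGroup W] [Module ℝ W] (X : Set W) (hconv : Convex ℝ X)
    (r : W → W → Prop)
    (hrefl : ∀ x ∈ X, r x x)
    (htrans : ∀ x ∈ X, ∀ y ∈ X, ∀ z ∈ X, r x y → r y z → r x z) :
    (∀ (a : ℝ), 0 < a → a < 1 → ∀ x ∈ X, ∀ y ∈ X, ∀ z ∈ X,
        (r x y ↔ r (a • x + (1 - a) • z) (a • y + (1 - a) • z)))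
      ↔ ∃ (V : ModuleCat.{u} ℝ) (rV : V → V → Prop),
          IsLinearPartialOrder rV ∧ ∃ f : W → V,
            (∀ x ∈ X, ∀ y ∈ X, ∀ (a : ℝ), 0 ≤ a → a ≤ 1 →
              f (a • x + (1 - a) • y) = a • f x + (1 - a) • f y) ∧
            ∀ x ∈ X, ∀ y ∈ X, (r x y ↔ rV (f x) (f y)) := by
  constructor
  · intro hInd
    set C := coneC X r with hC
    set N := subN X r with hN
    have hNsub : ∀ w : W, w ∈ N → w ∈ C := fun w hw => hw.1
    have hNsub' : ∀ w : W, w ∈ N → -w ∈ C := fun w hw => hw.2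
    set π : W → W ⧸ N := fun w => Submodule.Quotient.mk w with hπ
    have hπeq : ∀ u v : W, π u = π v ↔ u - v ∈ N := fun u v => Submodule.Quotient.eq N
    refine ⟨ModuleCat.of ℝ (W ⧸ N),
      (fun p q => ∃ u v : W, π u = p ∧ π v = q ∧ u - v ∈ C), ?_, π, ?_, ?_⟩
    · refine ⟨?_, ?_, ?_, ?_⟩
      · intro p
        obtain ⟨u, rfl⟩ := Submodule.Quotient.mk_surjective N p
        exact ⟨u, u, rfl, rfl, by simpa using zero_mem C⟩
      · rintro p q s ⟨u, v, hu, hv, huv⟩ ⟨v', w, hv', hw, hvw⟩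
        refine ⟨u, w, hu, hw, ?_⟩
        have h1 : v - v' ∈ C := hNsub _ ((hπeq v v').mp (hv.trans hv'.symm))
        have : u - w = (u - v) + (v - v') + (v' - w) := by abel
        rw [this]
        exact add_mem (add_mem huv h1) hvw
      · rintro p q ⟨u, v, hu, hv, huv⟩ ⟨v', u', hv', hu', hvu⟩
        have h1 : v - v' ∈ C := hNsub _ ((hπeq v v').mp (hv.trans hv'.symm))
        have h2 : u' - u ∈ C := hNsub _ ((hπeq u' u).mp (hu'.trans hu.symm))
        have hvu2 : v - u ∈ C := by
          have : v - u = (v - v') + (v' - u') + (u' - u) := by abel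
          rw [this]; exact add_mem (add_mem h1 hvu) h2
        have : u - v ∈ N := ⟨huv, by rwa [neg_sub]⟩
        rw [← hu, ← hv]
        exact (hπeq u v).mpr this
      · intro p q s l hl
        constructor
        · rintro ⟨u, v, hu, hv, huv⟩
          obtain ⟨w0, rfl⟩ := Submodule.Quotient.mk_surjective N s
          refine ⟨l • u + w0, l • v + w0, ?_, ?_, ?_⟩
          · rw [← hu]; rfl
          · rw [← hv]; rfl
          · have : (l • u + w0) - (l • v + w0) = l • (u - v) := by
              rw [smul_sub]; abel
            rw [this]
            exact smul_mem_coneC X r hl.le huv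
        · rintro ⟨p', q', hp', hq', hpq⟩
          obtain ⟨u, rfl⟩ := Submodule.Quotient.mk_surjective N p
          obtain ⟨v, rfl⟩ := Submodule.Quotient.mk_surjective N q
          obtain ⟨w0, rfl⟩ := Submodule.Quotient.mk_surjective N s
          refine ⟨u, v, rfl, rfl, ?_⟩
          have h1 : (l • u + w0) - p' ∈ C := by
            apply hNsub
            apply (hπeq _ _).mp
            rw [hp']
            simp only [π, Submodule.Quotient.mk_add, Submodule.Quotient.mk_smul]
          have h2 : q' - (l • v + w0) ∈ C := by
            apply hNsub
            apply (hπeq _ _).mp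
            rw [hq']
            simp only [π, Submodule.Quotient.mk_add, Submodule.Quotient.mk_smul]
          have h3 : l • (u - v) = ((l • u + w0) - p') + (p' - q') + (q' - (l • v + w0)) := by
            rw [smul_sub]; abel
          have h4 : l • (u - v) ∈ C := by
            rw [h3]; exact add_mem (add_mem h1 hpq) h2
          have h5 : u - v = l⁻¹ • (l • (u - v)) := by
            rw [smul_smul, inv_mul_cancel₀ hl.ne', one_smul]
          rw [h5]
          exact smul_mem_coneC X r (by positivity) h4
    · intro x _ y _ a _ _
      show π _ = _
      rw [hπ]
      simp only [Submodule.Quotient.mk_add, Submodule.Quotient.mk_smul]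
    · intro x hx y hy
      constructor
      · intro hxy
        exact ⟨x, y, rfl, rfl, AddSubmonoid.subset_closure
          ⟨1, zero_le_one, x, hx, y, hy, hxy, (one_smul ℝ _).symm⟩⟩
      · rintro ⟨u, v, hu, hv, huv⟩
        have h1 : x - u ∈ C := hNsub _ ((hπeq x u).mp hu.symm)
        have h2 : v - y ∈ C := hNsub _ ((hπeq v y).mp hv)
        have h3 : x - y ∈ C := by
          have : x - y = (x - u) + (u - v) + (v - y) := by abel
          rw [this]; exact add_mem (add_mem h1 huv) h2
        exact keyLemma X r hconv hrefl htrans hInd hx hy h3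
  · rintro ⟨V, rV, ⟨hVrefl, hVtrans, hVanti, hVlin⟩, f, hmix, hrep⟩
    intro a ha0 ha1 x hx y hy z hz
    have hmx : a • x + (1 - a) • z ∈ X := hconv hx hz ha0.le (by linarith) (by ring)
    have hmy : a • y + (1 - a) • z ∈ X := hconv hy hz ha0.le (by linarith) (by ring)
    rw [hrep x hx y hy, hrep _ hmx _ hmy,
      hmix x hx z hz a ha0.le ha1.le, hmix y hy z hz a ha0.le ha1.le]
    exact hVlin (f x) (f y) ((1 - a) • f z) a ha0
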